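/- Let P and Ψ be n×n real symmetric matrices with Ψ positive semidefinite and P − Ψ positive semidefinite. Define f(γ) = det(P − γΨ) for γ ∈ [0,1]. Then f is monotonically nonincreasing: for all 0 ≤ γ₁ ≤ γ₂ ≤ 1, f(γ₁) ≥ f(γ₂). -/

import Mathlib

open Matrix

lemma smul_posSemidef {n : ℕ} {Ψ : Matrix (Fin n) (Fin n) ℝ} (hΨ : Ψ.PosSemidef)
    {c : ℝ} (hc : 0 ≤ c) : (c • Ψ).PosSemidef := by
  constructor
  · unfold Matrix.IsHermitian
    rw [conjTranspose_smul, hΨ.1]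
    simp
  · intro x
    have := hΨ.2 x
    exact (hΨ.smul hc).2 x

lemma det_nonneg_of_posSemidef {n : ℕ} {A : Matrix (Fin n) (Fin n) ℝ}
    (hA : A.PosSemidef) : 0 ≤ A.det := by
  rw [hA.1.det_eq_prod_eigenvalues]
  apply Finset.prod_nonneg
  intro i _
  exact_mod_cast hA.eigenvalues_nonneg i

lemma one_le_det_one_add {n : ℕ} {M : Matrix (Fin n) (Fin n) ℝ}
    (hM : M.PosSemidef) : 1 ≤ (1 + M).det := by
  have hspec := hM.1.spectral_theorem
  set U : Matrix (Fin n) (Fin n) ℝ := (hM.1.eigenvectorUnitary : Matrix (Fin n) (Fin n) ℝ)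
  have hU : U * star U = 1 := (Matrix.mem_unitaryGroup_iff).mp hM.1.eigenvectorUnitary.2
  have h1 : (1 : Matrix (Fin n) (Fin n) ℝ) + M
      = U * (1 + diagonal (RCLike.ofReal ∘ hM.1.eigenvalues)) * star U := by
    rw [mul_add, add_mul, mul_one, hU]
    exact congrArg (1 + ·) hspec
  rw [h1, det_mul_right_comm, hU, Matrix.one_mul]
  have : (1 : Matrix (Fin n) (Fin n) ℝ) + diagonal (RCLike.ofReal ∘ hM.1.eigenvalues)
      = diagonal (fun i => 1 + hM.1.eigenvalues i) := by
    rw [← diagonal_one, diagonal_add]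
    rfl
  rw [this, det_diagonal]
  have h1 : ∀ i ∈ Finset.univ, (1:ℝ) ≤ 1 + hM.1.eigenvalues i := fun i _ => by
    have := hM.eigenvalues_nonneg i; linarith
  calc (1:ℝ) = ∏ _i : Fin n, 1 := by simp
    _ ≤ ∏ i : Fin n, (1 + hM.1.eigenvalues i) :=
        Finset.prod_le_prod (fun i _ => zero_le_one) h1

lemma det_le_det_add {n : ℕ} {A B : Matrix (Fin n) (Fin n) ℝ}
    (hA : A.PosSemidef) (hB : B.PosSemidef) : A.det ≤ (A + B).det := by
  rcases eq_or_ne A.det 0 with h0 | h0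
  · rw [h0]
    exact det_nonneg_of_posSemidef (hA.add hB)
  · set S := (open scoped MatrixOrder in CFC.sqrt A) with hS
    have hSps := (open scoped MatrixOrder in (CFC.sqrt_nonneg A).posSemidef)
    have hSS : S * S = A := (open scoped MatrixOrder in CFC.sqrt_mul_sqrt_self A hA.nonneg)
    have hdetS : S.det * S.det = A.det := by rw [← det_mul, hSS]
    have hSdet : S.det ≠ 0 := by
      intro h; rw [h, mul_zero] at hdetS; exact h0 hdetS.symm
    have hSunit : IsUnit S.det := isUnit_iff_ne_zero.mpr hSdet
    have hSinv : S * S⁻¹ = 1 := mul_nonsing_inv S hSunit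
    have hSinv' : S⁻¹ * S = 1 := nonsing_inv_mul S hSunit
    have hC : (S⁻¹ * B * S⁻¹).PosSemidef := by
      have := hB.conjTranspose_mul_mul_same S⁻¹
      rwa [show (S⁻¹)ᴴ = S⁻¹ from hSps.1.inv.eq] at this
    have h1 : A + B = S * (1 + S⁻¹ * B * S⁻¹) * S := by
      rw [mul_add, add_mul, mul_one, hSS]
      congr 1
      symm
      calc S * (S⁻¹ * B * S⁻¹) * S = (S * S⁻¹) * B * (S⁻¹ * S) := by
            simp only [Matrix.mul_assoc]
          _ = B := by rw [hSinv, hSinv', Matrix.one_mul, Matrix.mul_one]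
    rw [h1, det_mul, det_mul]
    have hAd : 0 < A.det := lt_of_le_of_ne (det_nonneg_of_posSemidef hA) (Ne.symm h0)
    calc A.det = S.det * 1 * S.det := by rw [mul_one]; exact hdetS.symm
      _ ≤ S.det * (1 + S⁻¹ * B * S⁻¹).det * S.det := by
          have h1d := one_le_det_one_add hC
          nlinarith [hdetS, hAd]

/-- Proposition 1: monotonic decrease of `det (P - γ • Ψ)` in `γ ∈ [0,1]`,
given `Ψ ⪰ 0` and `P - Ψ ⪰ 0` with `P` symmetric. -/
theorem det_sub_smul_antitone {n : ℕ} (P Ψ : Matrix (Fin n) (Fin n) ℝ)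
    (hP : P.IsHermitian) (hΨ : Ψ.PosSemidef) (hPΨ : (P - Ψ).PosSemidef)
    (f : ℝ → ℝ) (hf : ∀ γ, f γ = (P - γ • Ψ).det) :
    ∀ γ₁ γ₂ : ℝ, 0 ≤ γ₁ → γ₁ ≤ γ₂ → γ₂ ≤ 1 → f γ₂ ≤ f γ₁ := by
  intro γ₁ γ₂ h0 h12 h21
  rw [hf, hf]
  have hA : (P - γ₂ • Ψ).PosSemidef := by
    have heq : P - γ₂ • Ψ = (P - Ψ) + (1 - γ₂) • Ψ := by
      rw [sub_smul, one_smul]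
      abel
    rw [heq]
    exact hPΨ.add (smul_posSemidef hΨ (by linarith))
  have hB : ((γ₂ - γ₁) • Ψ).PosSemidef := smul_posSemidef hΨ (by linarith)
  have heq : P - γ₁ • Ψ = (P - γ₂ • Ψ) + (γ₂ - γ₁) • Ψ := by
    rw [sub_smul]
    abel
  rw [heq]
  exact det_le_det_add hA hB
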